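/- Define W_n = (1/18^{ℓ(n)}) · (1/8) · (2^{ℓ(n)+1} - n + (n - 2^{ℓ(n)})/9) + (1 + 1/n)² for n ≥ 2, where 2^{ℓ(n)} ≤ n < 2^{ℓ(n)+1}. Then lim_{n→∞} W_n = 1, lim_{n→∞} (2 log n)/(-log(W_n - 1)) = 2, and lim_{n→∞} n²(W_n - 1) = ∞. -/

import Mathlib

open MeasureTheory Real Set Filter
open scoped ENNReal Topology

noncomputable section

/-- First generating map of the Cantor set. -/
def T1 (x : ℝ) : ℝ := x / 3

/-- Second generating map of the Cantor set. -/
def T2 (x : ℝ) : ℝ := x / 3 + 2 / 3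

/-- Map indexed by `Fin 2`. -/
def Tm : Fin 2 → ℝ → ℝ := ![T1, T2]

/-- Composition `T_σ = T_{σ₁} ∘ ⋯ ∘ T_{σ_k}` for a word over `{1,2}` (as a list over `Fin 2`). -/
def Tw (l : List (Fin 2)) : ℝ → ℝ := l.foldr (fun i g => Tm i ∘ g) id

/-- Squared Euclidean distance between `x ∈ ℝ` (identified with `(x,0)`) and `(a,b) ∈ ℝ²`. -/
def rho (x : ℝ) (p : ℝ × ℝ) : ℝ := (x - p.1) ^ 2 + p.2 ^ 2

/-- Distortion error of a set `α ⊆ ℝ²` for `P`. -/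
def distortion (P : Measure ℝ) (α : Set (ℝ × ℝ)) : ℝ := ∫ x, ⨅ a : α, rho x (a : ℝ × ℝ) ∂P

/-- The constraint `S_j = {(x, 1/j) : 0 ≤ x ≤ 1}`. -/
def Sj (j : ℕ) : Set (ℝ × ℝ) := {p | p.1 ∈ Icc (0 : ℝ) 1 ∧ p.2 = 1 / (j : ℝ)}

/-- The `n`th constrained quantization error for `P` with respect to the family `Sj`. -/
def Vc (P : Measure ℝ) (n : ℕ) : ℝ :=
  sInf {e : ℝ | ∃ α : Finset (ℝ × ℝ), α.Nonempty ∧ α.card ≤ n ∧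
    (↑α : Set (ℝ × ℝ)) ⊆ ⋃ j ∈ Finset.Icc 1 n, Sj j ∧ e = distortion P (↑α : Set (ℝ × ℝ))}

theorem shifted_constraints_dimension_two (L : ℕ → ℕ)
    (hL : ∀ n, 2 ≤ n → 2 ^ L n ≤ n ∧ n < 2 ^ (L n + 1)) (W : ℕ → ℝ)
    (hW : ∀ n, 2 ≤ n → W n =
      (1 / 18 ^ L n) * (1 / 8) * (2 ^ (L n + 1) - (n : ℝ) + ((n : ℝ) - 2 ^ L n) / 9) +
        (1 + 1 / (n : ℝ)) ^ 2) :
    Tendsto W atTop (𝓝 1) ∧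
      Tendsto (fun n : ℕ => (2 * Real.log (n : ℝ)) / (-Real.log (W n - 1))) atTop (𝓝 2) ∧
      Tendsto (fun n : ℕ => (n : ℝ) ^ 2 * (W n - 1)) atTop atTop := by
  -- Key bound: for n ≥ 2, 2/n ≤ W n - 1 ≤ 3/n
  have hbound : ∀ n : ℕ, 2 ≤ n → 2 / (n : ℝ) ≤ W n - 1 ∧ W n - 1 ≤ 3 / (n : ℝ) := by
    intro n hn
    obtain ⟨h1, h2⟩ := hL n hn
    have hx : (2 : ℝ) ≤ (n : ℝ) := by exact_mod_cast hn
    have hx0 : (0 : ℝ) < (n : ℝ) := by linarith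
    set l := L n with hl
    have ha0 : (0 : ℝ) < 2 ^ l := by positivity
    have ha1 : (1 : ℝ) ≤ 2 ^ l := one_le_pow₀ (by norm_num)
    have haxl : (2 : ℝ) ^ l ≤ (n : ℝ) := by exact_mod_cast h1
    have haxu : (n : ℝ) ≤ 2 * 2 ^ l := by
      have h2' : (n : ℝ) < 2 ^ (l + 1) := by exact_mod_cast h2
      rw [pow_succ] at h2'; linarith
    have hp0 : (0 : ℝ) < 9 ^ l := by positivity
    have hp : ((2:ℝ) ^ l) ^ 2 ≤ 9 ^ l := by
      have : ((2:ℝ) ^ l) ^ 2 = 4 ^ l := by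
        rw [← pow_mul, mul_comm, pow_mul]; norm_num
      rw [this]
      exact pow_le_pow_left₀ (by norm_num) (by norm_num) l
    have h18 : (18:ℝ) ^ l = 2 ^ l * 9 ^ l := by rw [← mul_pow]; norm_num
    have e1 : W n - 1 = (2 * 2 ^ l - (n:ℝ) + ((n:ℝ) - 2 ^ l) / 9) / (8 * (2 ^ l * 9 ^ l))
        + (2 / (n:ℝ) + 1 / (n:ℝ) ^ 2) := by
      rw [hW n hn, pow_succ, h18]
      field_simp
      try ring
    set B := 2 * 2 ^ l - (n:ℝ) + ((n:ℝ) - 2 ^ l) / 9 with hB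
    have hB0 : 0 ≤ B := by rw [hB]; linarith
    have hBle : B ≤ 10 / 9 * 2 ^ l := by rw [hB]; linarith
    have hA : B / (8 * (2 ^ l * 9 ^ l)) ≤ 5 / 9 * (1 / (n:ℝ) ^ 2) := by
      rw [mul_one_div, div_le_div_iff₀ (by positivity) (by positivity)]
      have hn2 : (n:ℝ) ^ 2 ≤ 4 * ((2:ℝ) ^ l) ^ 2 := by nlinarith
      have hf1 : B * (n:ℝ) ^ 2 ≤ (10 / 9 * 2 ^ l) * (4 * ((2:ℝ) ^ l) ^ 2) :=
        mul_le_mul hBle hn2 (sq_nonneg _) (by positivity)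
      have hf2 : (2:ℝ) ^ l * ((2:ℝ) ^ l) ^ 2 ≤ 2 ^ l * 9 ^ l :=
        mul_le_mul_of_nonneg_left hp ha0.le
      nlinarith [hf1, hf2]
    have hApos : 0 ≤ B / (8 * (2 ^ l * 9 ^ l)) := by positivity
    constructor
    · rw [e1]
      have : (0:ℝ) ≤ 1 / (n:ℝ) ^ 2 := by positivity
      linarith
    · rw [e1]
      have h149 : (14 / 9) * (1 / (n:ℝ) ^ 2) ≤ 1 / (n:ℝ) := by
        rw [mul_one_div, div_le_div_iff₀ (by positivity) hx0]
        nlinarith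
      rw [show (2:ℝ) / (n:ℝ) = 2 * (1 / (n:ℝ)) from by ring,
        show (3:ℝ) / (n:ℝ) = 3 * (1 / (n:ℝ)) from by ring]
      linarith
  have hcast : Tendsto (fun n : ℕ => (n : ℝ)) atTop atTop := tendsto_natCast_atTop_atTop
  have hlog : Tendsto (fun n : ℕ => Real.log (n : ℝ)) atTop atTop :=
    Real.tendsto_log_atTop.comp hcast
  refine ⟨?_, ?_, ?_⟩
  · -- W → 1
    have hlo : Tendsto (fun n : ℕ => 1 + 2 / (n : ℝ)) atTop (𝓝 1) := by
      have h : Tendsto (fun n : ℕ => 1 + 2 / (n : ℝ)) atTop (𝓝 (1 + 0)) :=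
        Tendsto.add tendsto_const_nhds (tendsto_const_div_atTop_nhds_zero_nat 2)
      simpa using h
    have hhi : Tendsto (fun n : ℕ => 1 + 3 / (n : ℝ)) atTop (𝓝 1) := by
      have h : Tendsto (fun n : ℕ => 1 + 3 / (n : ℝ)) atTop (𝓝 (1 + 0)) :=
        Tendsto.add tendsto_const_nhds (tendsto_const_div_atTop_nhds_zero_nat 3)
      simpa using h
    refine tendsto_of_tendsto_of_tendsto_of_le_of_le' hlo hhi ?_ ?_
    · filter_upwards [eventually_ge_atTop 2] with n hn
      linarith [(hbound n hn).1]
    · filter_upwards [eventually_ge_atTop 2] with n hn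
      linarith [(hbound n hn).2]
  · -- quantization dimension 2
    have key : ∀ c : ℝ, Tendsto (fun n : ℕ => 2 * Real.log (n:ℝ) / (Real.log (n:ℝ) - c))
        atTop (𝓝 2) := by
      intro c
      have h0 : Tendsto (fun n : ℕ => c / Real.log (n:ℝ)) atTop (𝓝 0) :=
        tendsto_const_nhds.div_atTop hlog
      have h1 : Tendsto (fun n : ℕ => 2 / (1 - c / Real.log (n:ℝ))) atTop (𝓝 2) := by
        have := (tendsto_const_nhds (x := (2:ℝ))).div (tendsto_const_nhds.sub h0)
          (by norm_num : (1:ℝ) - 0 ≠ 0)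
        rw [sub_zero, div_one] at this
        exact this
      refine h1.congr' ?_
      filter_upwards [hlog.eventually_gt_atTop |c|] with n hn
      have hc : c < Real.log (n:ℝ) := lt_of_le_of_lt (le_abs_self c) hn
      have hl0 : Real.log (n:ℝ) ≠ 0 := by
        have : (0:ℝ) ≤ |c| := abs_nonneg c
        exact ne_of_gt (lt_of_le_of_lt this hn)
      have hs : Real.log (n:ℝ) - c ≠ 0 := by intro h; apply hl0; linarith [sub_eq_zero.mp h]
      field_simp
      try ring
    refine tendsto_of_tendsto_of_tendsto_of_le_of_le' (key (Real.log 2)) (key (Real.log 3)) ?_ ?_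
    all_goals
      filter_upwards [eventually_ge_atTop 2, hlog.eventually_gt_atTop (Real.log 3)] with n hn h3
    all_goals {
      obtain ⟨hlo, hhi⟩ := hbound n hn
      have hx0 : (0 : ℝ) < (n : ℝ) := by positivity
      have hy0 : 0 < W n - 1 := lt_of_lt_of_le (by positivity) hlo
      have hlog_le : Real.log (W n - 1) ≤ Real.log 3 - Real.log (n:ℝ) := by
        have h := Real.log_le_log hy0 hhi
        rwa [Real.log_div (by norm_num) (ne_of_gt hx0)] at h
      have hlog_ge : Real.log 2 - Real.log (n:ℝ) ≤ Real.log (W n - 1) := by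
        have h := Real.log_le_log (by positivity) hlo
        rwa [Real.log_div (by norm_num) (ne_of_gt hx0)] at h
      have hpos : 0 < -Real.log (W n - 1) := by linarith
      have hlogn : 0 ≤ Real.log (n:ℝ) := by
        have : (0:ℝ) < Real.log 3 := Real.log_pos (by norm_num)
        linarith
      gcongr <;> linarith }
  · -- n² (W n - 1) → ∞
    have h2n : Tendsto (fun n : ℕ => 2 * (n : ℝ)) atTop atTop :=
      Tendsto.const_mul_atTop two_pos hcast
    refine tendsto_atTop_mono' atTop ?_ h2n
    filter_upwards [eventually_ge_atTop 2] with n hn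
    obtain ⟨hlo, _⟩ := hbound n hn
    have hx0 : (0 : ℝ) < (n : ℝ) := by positivity
    have key : (n:ℝ) ^ 2 * (2 / (n:ℝ)) = 2 * (n:ℝ) := by field_simp
    have := mul_le_mul_of_nonneg_left hlo (sq_nonneg (n:ℝ))
    linarith [key ▸ this]
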